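/- Let q be an odd prime power, s an odd divisor of q+1, h an odd integer with 1 ≤ h ≤ s-1, and l = (q²-1)/s. Then there exist u_0, u_1, ..., u_{h-1} ∈ F_q^* (nonzero elements of the subfield F_q of F_{q²}) such that u_0 + u_1 + ... + u_{h-1} = 1 and Σ_{k=0}^{h-1} g^{kμl} u_k = 0 for every integer μ with (s-h)/2 + 1 ≤ μ ≤ (s+h)/2 - 1, where g is a primitive element of F_{q²}. -/

import Mathlib

open Polynomial Finset

/-- coefficient of a composition with `C c * X`. -/
lemma aux_comp_coeff {F : Type*} [CommRing F] (p : F[X]) (c : F) (k : ℕ) :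
    (p.comp (C c * X)).coeff k = c ^ k * p.coeff k := by
  induction p using Polynomial.induction_on' with
  | add p q hp hq => simp [add_comp, hp, hq, mul_add]
  | monomial n a =>
    rw [monomial_comp, mul_pow, ← C_pow, ← mul_assoc, ← C_mul, coeff_C_mul, coeff_X_pow,
      coeff_monomial]
    by_cases hkn : k = n
    · subst hkn; simp [mul_comm]
    · simp [hkn, Ne.symm hkn]

lemma aux_coeff_X_sub_C_mul {F : Type*} [CommRing F] (a : F) (p : F[X]) (k : ℕ) :
    ((X - C a) * p).coeff (k + 1) = p.coeff k - a * p.coeff (k + 1) := by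
  rw [sub_mul, coeff_sub, coeff_X_mul, coeff_C_mul]

/-- the key product polynomial. -/
noncomputable def auxQ {F : Type*} [Field F] (ζ : F) (m n : ℕ) : F[X] :=
  ∏ j ∈ Finset.range n, (X - C (ζ ^ (m + 1 + j)))

lemma auxQ_monic {F : Type*} [Field F] (ζ : F) (m n : ℕ) : (auxQ ζ m n).Monic :=
  monic_prod_of_monic _ _ fun _ _ => monic_X_sub_C _

lemma auxQ_natDegree {F : Type*} [Field F] (ζ : F) (m n : ℕ) :
    (auxQ ζ m n).natDegree = n := by
  rw [auxQ, natDegree_prod _ _ fun i _ => X_sub_C_ne_zero _]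
  simp only [natDegree_X_sub_C, Finset.sum_const, Finset.card_range, smul_eq_mul, mul_one]

/-- the functional equation. -/
lemma auxQ_funeq {F : Type*} [Field F] (ζ : F) (m n : ℕ) :
    (X - C (ζ ^ (m + n))) * ((auxQ ζ m n).comp (C ζ * X)) =
      C (ζ ^ n) * ((X - C (ζ ^ m)) * auxQ ζ m n) := by
  have hcomp : (auxQ ζ m n).comp (C ζ * X) =
      C (ζ ^ n) * ∏ j ∈ Finset.range n, (X - C (ζ ^ (m + j))) := by
    rw [auxQ, Polynomial.prod_comp]
    have h1 : ∀ j ∈ Finset.range n, (X - C (ζ ^ (m + 1 + j))).comp (C ζ * X) =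
        C ζ * (X - C (ζ ^ (m + j))) := by
      intro j _
      have hp : ζ ^ (m + 1 + j) = ζ * ζ ^ (m + j) := by
        rw [← pow_succ']; congr 1; omega
      rw [sub_comp, X_comp, C_comp, hp, C_mul, mul_sub]
    rw [Finset.prod_congr rfl h1, Finset.prod_mul_distrib, Finset.prod_const,
      Finset.card_range, C_pow]
  rw [hcomp, mul_left_comm]
  congr 1
  rw [mul_comm (X - C (ζ ^ (m + n))),
    ← Finset.prod_range_succ (fun j => X - C (ζ ^ (m + j))), Finset.prod_range_succ']
  rw [auxQ, mul_comm]
  congr 1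
  · refine Finset.prod_congr rfl fun j _ => ?_
    have : m + (j + 1) = m + 1 + j := by omega
    rw [this]

/-- all low coefficients of `auxQ` are nonzero. -/
lemma auxQ_coeff_ne_zero {F : Type*} [Field F] (ζ : F) (hζ0 : ζ ≠ 0) (m n : ℕ)
    (hne : ∀ t, 1 ≤ t → t ≤ n → ζ ^ t ≠ 1) :
    ∀ k ≤ n, (auxQ ζ m n).coeff k ≠ 0 := by
  set Q := auxQ ζ m n with hQ
  have hcn : Q.coeff n = 1 := by
    have := (auxQ_monic ζ m n).coeff_natDegree
    rwa [auxQ_natDegree] at this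
  have key : ∀ k, k + 1 ≤ n → Q.coeff (k + 1) ≠ 0 → Q.coeff k ≠ 0 := by
    intro k hk1 hck1 hck
    have heq := congrArg (fun p : F[X] => p.coeff (k + 1)) (auxQ_funeq ζ m n)
    simp only [← hQ, aux_coeff_X_sub_C_mul, coeff_C_mul, aux_comp_coeff] at heq
    have hpa : ζ ^ (m + n) = ζ ^ m * ζ ^ n := pow_add ζ m n
    have hmain : ζ ^ (m + n) * ζ ^ (k + 1) * Q.coeff (k + 1) =
        ζ ^ (m + n) * Q.coeff (k + 1) := by
      linear_combination (-1 : F) * heq + (ζ ^ k - ζ ^ n) * hck - Q.coeff (k + 1) * hpa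
    have h2 : ζ ^ (k + 1) * Q.coeff (k + 1) = 1 * Q.coeff (k + 1) := by
      apply mul_left_cancel₀ (pow_ne_zero (m + n) hζ0)
      rw [one_mul]
      linear_combination hmain
    exact hne (k + 1) (by omega) hk1 (mul_right_cancel₀ hck1 h2)
  have down : ∀ d, d ≤ n → Q.coeff (n - d) ≠ 0 := by
    intro d
    induction d with
    | zero => intro _; rw [Nat.sub_zero, hcn]; exact one_ne_zero
    | succ d ih =>
      intro hdn
      have hstep : n - (d + 1) + 1 = n - d := by omega
      exact key (n - (d + 1)) (by omega) (by rw [hstep]; exact ih (by omega))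
  intro k hk
  have := down (n - k) (Nat.sub_le _ _)
  rwa [Nat.sub_sub_self hk] at this

theorem stmt_9 (q s h : ℕ) (hq : IsPrimePow q) (hqodd : Odd q)
    (hsodd : Odd s) (hsdvd : s ∣ q + 1)
    (hh : 1 ≤ h) (hhodd : Odd h) (hhs : h ≤ s - 1)
    (F : Type*) [Field F] [Fintype F] (hF : Fintype.card F = q ^ 2)
    (g : F) (hg : orderOf g = q ^ 2 - 1) :
    ∃ u : ℕ → F, (∀ k < h, u k ≠ 0 ∧ (u k) ^ q = u k) ∧
      (∑ k ∈ Finset.range h, u k) = 1 ∧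
      ∀ μ : ℕ, (s - h) / 2 + 1 ≤ μ → μ ≤ (s + h) / 2 - 1 →
        ∑ k ∈ Finset.range h, g ^ (k * μ * ((q ^ 2 - 1) / s)) * u k = 0 := by
  -- basic numerics
  have hq2 : 2 ≤ q := hq.two_le
  have hs3 : 3 ≤ s := by
    rcases hsodd with ⟨c, hc⟩; omega
  have hq4 : 4 ≤ q ^ 2 := by nlinarith
  have hq21 : 1 ≤ q ^ 2 - 1 := by omega
  have hsq2 : s ∣ q ^ 2 - 1 := by
    have hqe : q ^ 2 - 1 = (q + 1) * (q - 1) := by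
      have h1 : 1 ≤ q := by omega
      have h2 : 1 ≤ q ^ 2 := by omega
      zify [h1, h2]
      ring
    exact hqe ▸ hsdvd.mul_right _
  set l := (q ^ 2 - 1) / s with hl
  have hls : l * s = q ^ 2 - 1 := Nat.div_mul_cancel hsq2
  have hl1 : 1 ≤ l := by
    rcases Nat.eq_zero_or_pos l with h0 | h1
    · rw [h0] at hls; omega
    · exact h1
  set ζ := g ^ l with hζ
  have hζpow : ∀ t : ℕ, ζ ^ t = 1 ↔ (q ^ 2 - 1) ∣ l * t := by
    intro t
    rw [hζ, ← pow_mul, ← hg, ← orderOf_dvd_iff_pow_eq_one]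
  have hζs : ζ ^ s = 1 := by rw [hζpow, hls]
  have hζne : ∀ t, 1 ≤ t → t ≤ s - 1 → ζ ^ t ≠ 1 := by
    intro t ht1 hts habs
    rw [hζpow] at habs
    have h2 : l * t < q ^ 2 - 1 := by
      have h3 : l * t + l * (s - t) = l * s := by
        rw [← Nat.mul_add]
        congr 1
        omega
      have h4 : 1 ≤ l * (s - t) := Nat.one_le_iff_ne_zero.mpr (Nat.mul_ne_zero (by omega) (by omega))
      omega
    have := Nat.le_of_dvd (by positivity) habs
    omega
  have hg0 : g ≠ 0 := by
    intro habs
    have h1 := pow_orderOf_eq_one g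
    rw [hg, habs, zero_pow (by omega : q ^ 2 - 1 ≠ 0)] at h1
    exact zero_ne_one h1
  have hζ0 : ζ ≠ 0 := pow_ne_zero _ hg0
  -- set up m, n
  obtain ⟨m, hm⟩ : ∃ m, s = 2 * m + h := by
    rcases hsodd with ⟨a, ha⟩; rcases hhodd with ⟨b, hb⟩
    exact ⟨a - b, by omega⟩
  set n := h - 1 with hn
  have hm1 : 1 ≤ m := by omega
  have hmn : m + n ≤ s - 2 := by omega
  -- Frobenius
  obtain ⟨p, k, hp, hk, hpk⟩ := hq
  have hpprime : p.Prime := hp.nat_prime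
  haveI : Fact p.Prime := ⟨hpprime⟩
  have hcard : Fintype.card F = p ^ (2 * k) := by
    rw [hF, ← hpk]; ring
  haveI : CharP F (ringChar F) := ringChar.charP F
  obtain ⟨n', hn'prime, hn'card⟩ := FiniteField.card F (ringChar F)
  have hring : ringChar F = p := by
    have hdvd : ringChar F ∣ p ^ (2 * k) := by
      rw [← hcard, hn'card]
      exact dvd_pow_self _ (by positivity)
    exact (Nat.prime_dvd_prime_iff_eq hn'prime hpprime).mp
      (Nat.Prime.dvd_of_dvd_pow hn'prime hdvd)
  haveI hchar : CharP F p := hring ▸ ringChar.charP F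
  haveI : ExpChar F p := ExpChar.prime hpprime
  set φ := iterateFrobenius F p k with hφ
  have hfrob : ∀ x : F, φ x = x ^ q := by
    intro x; rw [hφ, iterateFrobenius_def, hpk]
  have hζq : ζ ^ (q + 1) = 1 := by
    obtain ⟨c, hc⟩ := hsdvd
    rw [hc, pow_mul, hζs, one_pow]
  -- the polynomial
  set Q := auxQ ζ m n with hQQ
  have hQdeg : Q.natDegree = n := auxQ_natDegree ζ m n
  -- Frobenius on roots
  have hroot : ∀ j < n, (ζ ^ (m + 1 + j)) ^ q = ζ ^ (m + 1 + (n - 1 - j)) := by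
    intro j hj
    have e1 : (ζ ^ (m + 1 + j)) ^ q * ζ ^ (m + 1 + j) = 1 := by
      rw [← pow_succ, ← pow_mul, mul_comm (m + 1 + j), pow_mul, hζq, one_pow]
    have e2 : ζ ^ (m + 1 + (n - 1 - j)) * ζ ^ (m + 1 + j) = 1 := by
      rw [← pow_add]
      have hexp : m + 1 + (n - 1 - j) + (m + 1 + j) = s := by omega
      rw [hexp, hζs]
    exact mul_right_cancel₀ (pow_ne_zero _ hζ0) (e1.trans e2.symm)
  have hQmap : Q.map φ = Q := by
    conv_rhs => rw [hQQ, auxQ, ← Finset.prod_range_reflect]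
    rw [hQQ, auxQ, Polynomial.map_prod]
    refine Finset.prod_congr rfl fun j hj => ?_
    rw [Finset.mem_range] at hj
    rw [Polynomial.map_sub, map_X, map_C, hfrob, hroot j hj]
  have hcoeffq : ∀ j, (Q.coeff j) ^ q = Q.coeff j := by
    intro j
    have := congrArg (fun p : F[X] => p.coeff j) hQmap
    simpa [coeff_map, hfrob] using this
  -- evaluation at 1
  set e := Q.eval 1 with he
  have he0 : e ≠ 0 := by
    rw [he, hQQ, auxQ, eval_prod]
    apply Finset.prod_ne_zero_iff.mpr
    intro j hj
    rw [Finset.mem_range] at hj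
    simp only [eval_sub, eval_X, eval_C]
    intro habs
    have h1 : ζ ^ (m + 1 + j) = 1 := (sub_eq_zero.mp habs).symm
    exact hζne (m + 1 + j) (by omega) (by omega) h1
  have heq2 : e ^ q = e := by
    have h1 : φ e = e := by
      rw [he]
      have := Polynomial.eval_one_map φ Q
      rw [hQmap] at this
      exact this.symm
    rwa [hfrob] at h1
  -- the solution
  refine ⟨fun j => e⁻¹ * Q.coeff j, ?_, ?_, ?_⟩
  · intro j hj
    constructor
    · apply mul_ne_zero (inv_ne_zero he0)
      exact auxQ_coeff_ne_zero ζ hζ0 m n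
        (fun t ht1 htn => hζne t ht1 (by omega)) j (by omega)
    · rw [mul_pow, hcoeffq, inv_pow, heq2]
  · have hev : Q.eval 1 = ∑ j ∈ Finset.range h, Q.coeff j * 1 ^ j :=
      eval_eq_sum_range' (by omega) 1
    rw [← Finset.mul_sum]
    have : ∑ j ∈ Finset.range h, Q.coeff j = e := by
      rw [he, hev]
      exact Finset.sum_congr rfl fun j _ => by rw [one_pow, mul_one]
    rw [this, inv_mul_cancel₀ he0]
  · intro μ hμ1 hμ2
    have hdivs : (s - h) / 2 = m := by omega
    have hdivs2 : (s + h) / 2 = m + h := by omega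
    rw [hdivs] at hμ1
    rw [hdivs2] at hμ2
    have hroot2 : Q.eval (ζ ^ μ) = 0 := by
      rw [hQQ, auxQ, eval_prod]
      apply Finset.prod_eq_zero (Finset.mem_range.mpr (show μ - m - 1 < n by omega))
      simp only [eval_sub, eval_X, eval_C]
      have : m + 1 + (μ - m - 1) = μ := by omega
      rw [this, sub_self]
    have hev : Q.eval (ζ ^ μ) = ∑ j ∈ Finset.range h, Q.coeff j * (ζ ^ μ) ^ j :=
      eval_eq_sum_range' (by omega) _
    have hterm : ∀ j, g ^ (j * μ * l) * (e⁻¹ * Q.coeff j) =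
        e⁻¹ * (Q.coeff j * (ζ ^ μ) ^ j) := by
      intro j
      have : g ^ (j * μ * l) = (ζ ^ μ) ^ j := by
        rw [hζ, ← pow_mul, ← pow_mul]
        congr 1
        ring
      rw [this]; ring
    calc ∑ j ∈ Finset.range h, g ^ (j * μ * l) * (e⁻¹ * Q.coeff j)
        = ∑ j ∈ Finset.range h, e⁻¹ * (Q.coeff j * (ζ ^ μ) ^ j) :=
          Finset.sum_congr rfl fun j _ => hterm j
      _ = e⁻¹ * Q.eval (ζ ^ μ) := by rw [← Finset.mul_sum, hev]
      _ = 0 := by rw [hroot2, mul_zero]
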